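/- For the negative-exponential jump measure $\nu(dJ) = \phi e^{\phi J}\mathbf{1}_{J\le 0}\,dJ$ with $\phi > 0$, and any real number $u$ with $u > -\phi$, the integral $\lambda\int_{-\infty}^0 \left[ e^{uJ} - 1 - (e^J - 1)u \right] \phi e^{\phi J}\, dJ$ converges and equals $\frac{\lambda}{\phi+1}\cdot\frac{u^2 - u}{\phi + u}$. -/

import Mathlib

open MeasureTheory

lemma exp_mul_hasDerivAt (a x : ℝ) (ha : a ≠ 0) :
    HasDerivAt (fun y : ℝ => Real.exp (a * y) / a) (Real.exp (a * x)) x := by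
  have h : HasDerivAt (fun y : ℝ => Real.exp (a * y)) (Real.exp (a * x) * a) x := by
    simpa [mul_comm, Function.comp_def] using (Real.hasDerivAt_exp (a * x)).comp x
      ((hasDerivAt_id x).const_mul a)
  simpa [mul_div_assoc, mul_div_cancel_right₀ _ ha] using h.div_const a

lemma exp_mul_tendsto (a : ℝ) (ha : 0 < a) :
    Filter.Tendsto (fun y : ℝ => Real.exp (a * y) / a) Filter.atBot (nhds 0) := by
  have h1 : Filter.Tendsto (fun y : ℝ => a * y) Filter.atBot Filter.atBot :=
    Filter.tendsto_atBot_atBot.mpr (fun b => ⟨b / a, fun x hx => by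
      calc a * x ≤ a * (b / a) := by nlinarith
        _ = b := by field_simp⟩)
  have := (Real.tendsto_exp_atBot.comp h1).div_const a
  simpa using this

lemma exp_mul_integrableOn (a : ℝ) (ha : 0 < a) :
    IntegrableOn (fun J : ℝ => Real.exp (a * J)) (Set.Iic (0:ℝ)) := by
  apply integrableOn_Iic_of_intervalIntegral_norm_bounded (1 / a) 0
    (a := fun i : ℝ => i) (l := Filter.atBot)
  · intro i
    exact (Real.continuous_exp.comp (continuous_const.mul continuous_id)).integrableOn_Ioc
  · exact Filter.tendsto_id
  · filter_upwards [Filter.Iic_mem_atBot (0:ℝ)] with i hi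
    have hle : i ≤ (0:ℝ) := hi
    have hderiv : ∀ x ∈ Set.uIcc i 0,
        HasDerivAt (fun y : ℝ => Real.exp (a * y) / a) (Real.exp (a * x)) x :=
      fun x _ => exp_mul_hasDerivAt a x ha.ne'
    have hint : IntervalIntegrable (fun x => Real.exp (a * x)) volume i 0 :=
      (Real.continuous_exp.comp (continuous_const.mul continuous_id)).intervalIntegrable i 0
    have := intervalIntegral.integral_eq_sub_of_hasDerivAt hderiv hint
    have hnorm : (∫ x in i..0, ‖Real.exp (a * x)‖) = ∫ x in i..0, Real.exp (a * x) := by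
      congr 1; ext x; exact Real.norm_of_nonneg (Real.exp_pos _).le
    rw [hnorm, this]
    have h1 : Real.exp (a * i) / a > 0 := div_pos (Real.exp_pos _) ha
    have : Real.exp (a * 0) / a = 1 / a := by simp
    linarith [this]

lemma exp_mul_integral (a : ℝ) (ha : 0 < a) :
    ∫ J in Set.Iic (0:ℝ), Real.exp (a * J) = 1 / a := by
  have := integral_Iic_of_hasDerivAt_of_tendsto'
    (f := fun y : ℝ => Real.exp (a * y) / a) (f' := fun x => Real.exp (a * x)) (a := 0)
    (m := 0) (fun x _ => exp_mul_hasDerivAt a x ha.ne')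
    (exp_mul_integrableOn a ha) (exp_mul_tendsto a ha)
  simpa using this

/-- For the negative-exponential jump measure `ν(dJ) = φ e^{φJ} 1_{J ≤ 0} dJ` with `φ > 0`
and `u > -φ`, the compensated jump integral converges and equals
`λ/(φ+1) · (u² - u)/(φ + u)`. -/
theorem exponential_jump_symbol
    (φ lam u : ℝ) (hφ : 0 < φ) (hlam : 0 ≤ lam) (hu : -φ < u) :
    IntegrableOn
      (fun J : ℝ => (Real.exp (u * J) - 1 - (Real.exp J - 1) * u) * (φ * Real.exp (φ * J)))
      (Set.Iic 0)
    ∧ lam * ∫ J in Set.Iic (0 : ℝ),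
        (Real.exp (u * J) - 1 - (Real.exp J - 1) * u) * (φ * Real.exp (φ * J))
      = lam / (φ + 1) * ((u ^ 2 - u) / (φ + u)) := by
  have huφ : 0 < u + φ := by linarith
  have h1φ : 0 < 1 + φ := by linarith
  -- the four pieces
  have i1 : IntegrableOn (fun J : ℝ => Real.exp ((u + φ) * J)) (Set.Iic 0) :=
    exp_mul_integrableOn _ huφ
  have i2 : IntegrableOn (fun J : ℝ => Real.exp (φ * J)) (Set.Iic 0) :=
    exp_mul_integrableOn _ hφ
  have i3 : IntegrableOn (fun J : ℝ => Real.exp ((1 + φ) * J)) (Set.Iic 0) :=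
    exp_mul_integrableOn _ h1φ
  have hfun : ∀ J : ℝ,
      (Real.exp (u * J) - 1 - (Real.exp J - 1) * u) * (φ * Real.exp (φ * J))
      = φ * Real.exp ((u + φ) * J) - φ * Real.exp (φ * J)
        - (u * φ) * Real.exp ((1 + φ) * J) + (u * φ) * Real.exp (φ * J) := by
    intro J
    have e1 : Real.exp ((u + φ) * J) = Real.exp (u * J) * Real.exp (φ * J) := by
      rw [← Real.exp_add]; ring_nf
    have e2 : Real.exp ((1 + φ) * J) = Real.exp J * Real.exp (φ * J) := by
      rw [← Real.exp_add]; ring_nf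
    rw [e1, e2]; ring
  have hint : IntegrableOn
      (fun J : ℝ => (Real.exp (u * J) - 1 - (Real.exp J - 1) * u) * (φ * Real.exp (φ * J)))
      (Set.Iic 0) := by
    have : IntegrableOn (fun J : ℝ =>
        φ * Real.exp ((u + φ) * J) - φ * Real.exp (φ * J)
        - (u * φ) * Real.exp ((1 + φ) * J) + (u * φ) * Real.exp (φ * J)) (Set.Iic 0) :=
      (((i1.const_mul φ).sub (i2.const_mul φ)).sub (i3.const_mul (u * φ))).add
        (i2.const_mul (u * φ))
    exact this.congr_fun (fun J _ => (hfun J).symm) measurableSet_Iic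
  refine ⟨hint, ?_⟩
  have I1 : ∫ J in Set.Iic (0:ℝ), φ * Real.exp ((u + φ) * J) = φ * (1 / (u + φ)) := by
    rw [integral_const_mul, exp_mul_integral _ huφ]
  have I2 : ∫ J in Set.Iic (0:ℝ), φ * Real.exp (φ * J) = φ * (1 / φ) := by
    rw [integral_const_mul, exp_mul_integral _ hφ]
  have I3 : ∫ J in Set.Iic (0:ℝ), (u * φ) * Real.exp ((1 + φ) * J) = (u * φ) * (1 / (1 + φ)) := by
    rw [integral_const_mul, exp_mul_integral _ h1φ]
  have I4 : ∫ J in Set.Iic (0:ℝ), (u * φ) * Real.exp (φ * J) = (u * φ) * (1 / φ) := by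
    rw [integral_const_mul, exp_mul_integral _ hφ]
  have ia : IntegrableOn (fun J : ℝ =>
      φ * Real.exp ((u + φ) * J) - φ * Real.exp (φ * J)) (Set.Iic 0) :=
    (i1.const_mul φ).sub (i2.const_mul φ)
  have ib : IntegrableOn (fun J : ℝ =>
      φ * Real.exp ((u + φ) * J) - φ * Real.exp (φ * J)
        - (u * φ) * Real.exp ((1 + φ) * J)) (Set.Iic 0) := ia.sub (i3.const_mul (u * φ))
  have hval : ∫ J in Set.Iic (0 : ℝ),
      (Real.exp (u * J) - 1 - (Real.exp J - 1) * u) * (φ * Real.exp (φ * J))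
      = φ * (1 / (u + φ)) - φ * (1 / φ) - (u * φ) * (1 / (1 + φ)) + (u * φ) * (1 / φ) := by
    rw [setIntegral_congr_fun measurableSet_Iic (fun J _ => hfun J),
      integral_add ib (i2.const_mul (u * φ)), integral_sub ia (i3.const_mul (u * φ)),
      integral_sub (i1.const_mul φ) (i2.const_mul φ), I1, I2, I3, I4]
  rw [hval]
  have h2 : φ + u ≠ 0 := by linarith
  have h3 : u + φ ≠ 0 := by linarith
  have h4 : 1 + φ ≠ 0 := by linarith
  have h5 : φ + 1 ≠ 0 := by linarith
  field_simp
  ring
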